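/- Let G be a simple graph, δ a distribution of G, and f a δ-flow of G. Then there exists an acyclic δ-flow f′ of G such that, for every natural number k: if f is edge-bounded by k then f′ is edge-bounded by k, and if f is vertex-bounded by k then f′ is vertex-bounded by k. -/

import Mathlib

open Function

section Helpers

lemma int_sign_cases {x y : ℤ} (h : 0 ≤ x * y) : (0 ≤ x ∧ 0 ≤ y) ∨ (x ≤ 0 ∧ y ≤ 0) := by
  rcases le_or_gt 0 x with hx | hx
  · rcases le_or_gt 0 y with hy | hy
    · exact Or.inl ⟨hx, hy⟩
    · have : x = 0 := by nlinarith
      exact Or.inr ⟨this.le, hy.le⟩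
  · rcases le_or_gt 0 y with hy | hy
    · have : y = 0 := by nlinarith
      exact Or.inr ⟨hx.le, this.le⟩
    · exact Or.inr ⟨hx.le, hy.le⟩

/-- From `0 ≤ x*z`, `0 ≤ y*z`, `|x| ≤ |z|` conclude `0 ≤ x*y`. -/
lemma int_mul_nonneg_trans {x y z : ℤ} (hx : 0 ≤ x * z) (hy : 0 ≤ y * z)
    (hxz : |x| ≤ |z|) : 0 ≤ x * y := by
  rcases lt_trichotomy z 0 with hz | hz | hz
  · have h1 : x ≤ 0 := by nlinarith
    have h2 : y ≤ 0 := by nlinarith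
    nlinarith
  · subst hz
    have : x = 0 := by simpa using abs_nonpos_iff.mp (by simpa using hxz)
    simp [this]
  · have h1 : 0 ≤ x := by nlinarith
    have h2 : 0 ≤ y := by nlinarith
    exact mul_nonneg h1 h2

lemma int_eq_of_abs_eq {x y : ℤ} (h1 : |x| = |y|) (h2 : 0 ≤ x * y) : x = y := by
  rcases int_sign_cases h2 with ⟨hx, hy⟩ | ⟨hx, hy⟩
  · rwa [abs_of_nonneg hx, abs_of_nonneg hy] at h1
  · rw [abs_of_nonpos hx, abs_of_nonpos hy] at h1; omega

/-- The "closer to zero than" relation on integer-valued flows. -/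
def IntBelow {V : Type*} (g g' : V → V → ℤ) : Prop :=
  ∀ a b, |g a b| ≤ |g' a b| ∧ 0 ≤ g a b * g' a b

lemma intBelow_refl {V : Type*} (g : V → V → ℤ) : IntBelow g g :=
  fun a b => ⟨le_refl _, mul_self_nonneg _⟩

lemma intBelow_trans {V : Type*} {g₁ g₂ g₃ : V → V → ℤ}
    (h12 : IntBelow g₁ g₂) (h23 : IntBelow g₂ g₃) : IntBelow g₁ g₃ := by
  intro a b
  obtain ⟨ha12, hp12⟩ := h12 a b
  obtain ⟨ha23, hp23⟩ := h23 a b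
  refine ⟨ha12.trans ha23, ?_⟩
  exact int_mul_nonneg_trans (z := g₂ a b) hp12 (by linarith [hp23]; ) ha12

lemma intBelow_antisymm {V : Type*} {g₁ g₂ : V → V → ℤ}
    (h12 : IntBelow g₁ g₂) (h21 : IntBelow g₂ g₁) : g₁ = g₂ := by
  funext a b
  exact int_eq_of_abs_eq (le_antisymm (h12 a b).1 (h21 a b).1) (h12 a b).2

end Helpers

lemma cycle_extract {V : Type*} (g : V → V → ℤ) (hskew : ∀ u v, g u v = -g v u)
    (h : ∃ (m : ℕ) (u : Fin (m + 1) → V),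
      (∀ i : Fin m, 0 < g (u i.castSucc) (u i.succ)) ∧ 0 < g (u (Fin.last m)) (u 0)) :
    ∃ (d : ℕ) (v : Fin (d + 3) → V), Function.Injective v ∧
      ∀ i : Fin (d + 3), 0 < g (v i) (v (i + 1)) := by
  classical
  have hgxx : ∀ x, g x x = 0 := fun x => by have := hskew x x; omega
  have main : ∃ (d : ℕ) (hd : 0 < d) (v : Fin d → V), Function.Injective v ∧
      ∀ i : Fin d, 0 < g (v i) (v ⟨(i.val + 1) % d, Nat.mod_lt _ hd⟩) := by
    obtain ⟨m, u, h1, h2⟩ := h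
    rcases Nat.eq_zero_or_pos m with rfl | hm
    · exfalso
      have e : (Fin.last 0) = (0 : Fin 1) := by decide
      rw [e] at h2
      simp [hgxx] at h2
    have hm1 : 0 < m + 1 := Nat.succ_pos m
    set w : ℕ → V := fun t => u ⟨t % (m+1), Nat.mod_lt _ hm1⟩ with hwdef
    have key : ∀ t : ℕ, (t + 1) % (m+1) = (t % (m+1) + 1) % (m+1) := by
      intro t
      rw [Nat.add_mod, Nat.mod_eq_of_lt (show 1 < m + 1 by omega)]
    have hwstep : ∀ t, 0 < g (w t) (w (t + 1)) := by
      intro t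
      have hlt : t % (m+1) < m + 1 := Nat.mod_lt _ hm1
      show 0 < g (u ⟨t % (m+1), Nat.mod_lt _ hm1⟩) (u ⟨(t+1) % (m+1), Nat.mod_lt _ hm1⟩)
      rcases lt_or_eq_of_le (Nat.lt_succ_iff.mp hlt) with hr | hr
      · have e1 : (t + 1) % (m+1) = t % (m+1) + 1 := by
          rw [key, Nat.mod_eq_of_lt (by omega)]
        have := h1 ⟨t % (m+1), hr⟩
        simp only [Fin.castSucc_mk, Fin.succ_mk] at this
        have ee : (⟨(t+1) % (m+1), Nat.mod_lt _ hm1⟩ : Fin (m+1)) = ⟨t % (m+1) + 1, by omega⟩ :=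
          Fin.ext e1
        rw [ee]
        exact this
      · have e1 : (t + 1) % (m+1) = 0 := by
          rw [key, hr, Nat.mod_self]
        have el : (⟨t % (m+1), Nat.mod_lt _ hm1⟩ : Fin (m+1)) = Fin.last m := Fin.ext (by simp [hr])
        have e0 : (⟨(t+1) % (m+1), Nat.mod_lt _ hm1⟩ : Fin (m+1)) = 0 := Fin.ext (by simp [e1])
        rw [el, e0]
        exact h2
    have hQ : ∃ d, 0 < d ∧ ∃ t, w t = w (t + d) := by
      refine ⟨m + 1, by omega, 0, ?_⟩
      show u _ = u _
      apply congrArg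
      apply Fin.ext
      simp
    refine ⟨Nat.find hQ, (Nat.find_spec hQ).1, ?_⟩
    obtain ⟨hdpos, t0, ht0⟩ := Nat.find_spec hQ
    have hmin : ∀ d', d' < Nat.find hQ → ¬ (0 < d' ∧ ∃ t, w t = w (t + d')) :=
      fun d' h => Nat.find_min hQ h
    refine ⟨fun i => w (t0 + i.val), ?_, ?_⟩
    · intro i j hij
      by_contra hne
      rcases Ne.lt_or_gt (fun e : i = j => hne e) with hlt | hlt
      · exact hmin (j.val - i.val) (by omega) ⟨by omega, t0 + i.val, by
          rw [show t0 + i.val + (j.val - i.val) = t0 + j.val by omega]; exact hij⟩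
      · exact hmin (i.val - j.val) (by omega) ⟨by omega, t0 + j.val, by
          rw [show t0 + j.val + (i.val - j.val) = t0 + i.val by omega]; exact hij.symm⟩
    · intro i
      rcases lt_or_eq_of_le (show i.val + 1 ≤ Nat.find hQ from i.isLt) with hi | hi
      · have e : (i.val + 1) % Nat.find hQ = i.val + 1 := Nat.mod_eq_of_lt hi
        simp only [e]
        have := hwstep (t0 + i.val)
        rwa [show t0 + i.val + 1 = t0 + (i.val + 1) from rfl] at this
      · have e : (i.val + 1) % Nat.find hQ = 0 := by rw [hi, Nat.mod_self]
        simp only [e]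
        have := hwstep (t0 + i.val)
        rw [show t0 + i.val + 1 = t0 + Nat.find hQ by omega, ← ht0] at this
        simpa using this
  obtain ⟨d, hdpos, v, hinj, hedge⟩ := main
  have hd3 : 3 ≤ d := by
    by_contra hlt
    interval_cases d
    · have := hedge ⟨0, by omega⟩
      simp [hgxx] at this
    · have e0 := hedge ⟨0, by omega⟩
      have e1 := hedge ⟨1, by omega⟩
      norm_num at e0 e1
      have := hskew (v 0) (v 1)
      omega
  obtain ⟨d', rfl⟩ : ∃ d', d = d' + 3 := ⟨d - 3, by omega⟩
  refine ⟨d', v, hinj, fun i => ?_⟩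
  have e : (i + 1 : Fin (d' + 3)) = ⟨(i.val + 1) % (d' + 3), Nat.mod_lt _ (by omega)⟩ := by
    apply Fin.ext
    simp [Fin.val_add]
  rw [e]
  exact hedge i

open Fin.CommRing in
lemma cancel_lemma {V : Type*} (g : V → V → ℤ) (hskew : ∀ u v, g u v = -g v u) (d : ℕ)
    (v : Fin (d + 3) → V) (hinj : Function.Injective v)
    (hedge : ∀ i : Fin (d + 3), 0 < g (v i) (v (i + 1))) :
    ∃ w : V → V → ℤ,
      (∀ a b, w a b = -w b a) ∧
      (∀ a b, |g a b - w a b| ≤ |g a b| ∧ 0 ≤ (g a b - w a b) * g a b) ∧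
      (∀ x (T : Finset V), (∀ b, w x b ≠ 0 → b ∈ T) → ∑ b ∈ T, w x b = 0) ∧
      w (v 0) (v 1) = 1 := by
  classical
  have h2ne : (2 : Fin (d + 3)) ≠ 0 := by simp [Fin.ext_iff]; rw [Nat.mod_eq_of_lt (by omega)]; omega
  set fwd : V → V → Prop := fun a b => ∃ i, a = v i ∧ b = v (i + 1) with hfwd
  have noBoth : ∀ a b, fwd a b → fwd b a → False := by
    rintro a b ⟨i, rfl, rfl⟩ ⟨j, hj1, hj2⟩
    have e1 : j = i + 1 := hinj hj1.symm
    have e2 : j + 1 = i := (hinj hj2).symm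
    rw [e1] at e2
    have : (2 : Fin (d + 3)) = 0 := by
      have := e2
      rw [show i + 1 + 1 = i + 2 by ring] at this
      calc (2 : Fin (d+3)) = i + 2 - i := by ring
        _ = i - i := by rw [this]
        _ = 0 := by ring
    exact h2ne this
  have hpos : ∀ a b, fwd a b → 0 < g a b := by
    rintro a b ⟨i, rfl, rfl⟩; exact hedge i
  refine ⟨fun a b => (if fwd a b then 1 else 0) - (if fwd b a then 1 else 0), ?_, ?_, ?_, ?_⟩
  · intro a b; ring
  · intro a b
    beta_reduce
    by_cases h1 : fwd a b
    · have hg := hpos a b h1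
      rw [if_pos h1, if_neg (fun h2 => noBoth a b h1 h2)]
      constructor
      · rw [abs_of_nonneg (by omega), abs_of_pos hg]; omega
      · have : 0 ≤ g a b - (1 - 0) := by omega
        nlinarith
    · by_cases h2 : fwd b a
      · have hg := hpos b a h2
        have hab : g a b = -g b a := hskew a b
        rw [if_neg h1, if_pos h2]
        constructor
        · rw [abs_of_nonpos (by omega), abs_of_nonpos (by omega)]; omega
        · nlinarith
      · rw [if_neg h1, if_neg h2]
        constructor
        · simp
        · simpa using mul_self_nonneg (g a b)
  · intro x T hT
    by_cases hx : ∃ i, x = v i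
    · obtain ⟨i, rfl⟩ := hx
      have key : ∀ b, ((if fwd (v i) b then (1:ℤ) else 0) - (if fwd b (v i) then 1 else 0)) =
          (if b = v (i+1) then 1 else 0) - (if b = v (i-1) then 1 else 0) := by
        intro b
        congr 1
        · congr 1
          apply propext
          constructor
          · rintro ⟨j, hj1, hj2⟩
            rw [← hinj hj1] at hj2
            exact hj2
          · rintro rfl; exact ⟨i, rfl, rfl⟩
        · congr 1
          apply propext
          constructor
          · rintro ⟨j, hj1, hj2⟩
            have : j = i - 1 := by
              have e := hinj hj2
              rw [e]; ring
            rw [hj1, this]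
          · rintro rfl; exact ⟨i - 1, rfl, by rw [sub_add_cancel]⟩
      beta_reduce
      rw [Finset.sum_congr rfl (fun b _ => key b)]
      have hne : v (i + 1) ≠ v (i - 1) := by
        intro h
        have := hinj h
        have : (2 : Fin (d+3)) = 0 := by
          calc (2 : Fin (d+3)) = (i+1) - (i-1) := by ring
            _ = (i-1) - (i-1) := by rw [this]
            _ = 0 := by ring
        exact h2ne this
      have hm1 : v (i+1) ∈ T := by
        apply hT
        beta_reduce
        rw [if_pos (⟨i, rfl, rfl⟩ : fwd (v i) (v (i+1))), if_neg (fun h2 => noBoth _ _ ⟨i, rfl, rfl⟩ h2)]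
        norm_num
      have hm2 : v (i-1) ∈ T := by
        apply hT
        beta_reduce
        have hb : fwd (v (i-1)) (v i) := ⟨i - 1, rfl, by rw [sub_add_cancel]⟩
        rw [if_neg (fun h1 => noBoth _ _ h1 hb), if_pos hb]
        norm_num
      rw [show ∑ b ∈ T, ((if b = v (i+1) then (1:ℤ) else 0) - (if b = v (i-1) then 1 else 0))
          = ∑ b ∈ T, (if b = v (i+1) then (1:ℤ) else 0) - ∑ b ∈ T, (if b = v (i-1) then (1:ℤ) else 0) from Finset.sum_sub_distrib _ _]
      rw [Finset.sum_ite_eq' T (v (i+1)) (fun _ => (1:ℤ)), Finset.sum_ite_eq' T (v (i-1)) (fun _ => (1:ℤ))]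
      rw [if_pos hm1, if_pos hm2]
      ring
    · have : ∀ b ∈ T, ((if fwd x b then (1:ℤ) else 0) - (if fwd b x then 1 else 0)) = 0 := by
        intro b _
        beta_reduce
        rw [if_neg, if_neg]
        · ring
        · rintro ⟨j, hj1, hj2⟩; exact hx ⟨j + 1, hj2⟩
        · rintro ⟨j, hj1, hj2⟩; exact hx ⟨j, hj1⟩
      beta_reduce
      rw [Finset.sum_congr rfl this]
      simp
  · have h1 : fwd (v 0) (v 1) := ⟨0, rfl, by norm_num⟩
    beta_reduce
    rw [if_pos h1, if_neg (fun h2 => noBoth _ _ h1 h2)]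
    norm_num

theorem exists_acyclic_delta_flow {V : Type*} (G : SimpleGraph V) (δ : V → ℕ)
    (f : V → V → ℤ)
    (hskew : ∀ u v : V, f u v = -f v u)
    (hadj : ∀ u v : V, f u v ≠ 0 → G.Adj u v)
    (hfin : ∀ v : V, {u : V | f v u ≠ 0}.Finite)
    (hδ : ∀ v : V, (∑ᶠ u : V, f v u) = (δ v : ℤ) - 1 ∨
      (δ v = 0 ∧ (∑ᶠ u : V, f v u) = 0)) :
    ∃ f' : V → V → ℤ,
      (∀ u v : V, f' u v = -f' v u) ∧
      (∀ u v : V, f' u v ≠ 0 → G.Adj u v) ∧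
      (∀ v : V, {u : V | f' v u ≠ 0}.Finite) ∧
      (∀ v : V, (∑ᶠ u : V, f' v u) = (δ v : ℤ) - 1 ∨
        (δ v = 0 ∧ (∑ᶠ u : V, f' v u) = 0)) ∧
      (¬ ∃ (m : ℕ) (u : Fin (m + 1) → V),
        (∀ i : Fin m, 0 < f' (u i.castSucc) (u i.succ)) ∧
          0 < f' (u (Fin.last m)) (u 0)) ∧
      ∀ k : ℕ,
        ((∀ u v : V, |f u v| ≤ (k : ℤ)) → ∀ u v : V, |f' u v| ≤ (k : ℤ)) ∧
        ((∀ v : V, ∑ᶠ u : V, |f u v| ≤ (k : ℤ)) →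
          ∀ v : V, ∑ᶠ u : V, |f' u v| ≤ (k : ℤ)) := by
  classical
  set D : V → Finset V := fun v => (hfin v).toFinset with hD
  have hDmem : ∀ v u, u ∈ D v ↔ f v u ≠ 0 := by
    intro v u; simp [hD, Set.Finite.mem_toFinset]
  -- the set of admissible flows
  set S : Set (V → V → ℤ) :=
    {g | (∀ a b, g a b = -g b a) ∧ IntBelow g f ∧ (∀ x, ∑ u ∈ D x, g x u = ∑ u ∈ D x, f x u)}
    with hS
  have hfS : f ∈ S := ⟨hskew, intBelow_refl f, fun _ => rfl⟩
  -- Zorn's lemma for the reversed IntBelow order on S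
  have hzorn : ∃ mm : S, ∀ a : S, IntBelow a.1 mm.1 → IntBelow mm.1 a.1 := by
    apply exists_maximal_of_chains_bounded (r := fun x y : S => IntBelow y.1 x.1)
    · intro c hc
      rcases Set.eq_empty_or_nonempty c with rfl | ⟨g1, hg1⟩
      · exact ⟨⟨f, hfS⟩, by simp⟩
      -- the pointwise infimum
      have hSne : ∀ a b, ((fun g : S => |g.1 a b|) '' c).Nonempty :=
        fun a b => ⟨|g1.1 a b|, Set.mem_image_of_mem _ hg1⟩
      have hSbdd : ∀ a b, BddBelow ((fun g : S => |g.1 a b|) '' c) := by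
        intro a b
        refine ⟨0, fun x hx => ?_⟩
        obtain ⟨g, _, rfl⟩ := hx
        exact abs_nonneg _
      set s : V → V → ℤ := fun a b => sInf ((fun g : S => |g.1 a b|) '' c) with hs
      have hs_mem : ∀ a b, ∃ g : S, g ∈ c ∧ |g.1 a b| = s a b := by
        intro a b
        obtain ⟨g, hgc, hg⟩ := Int.csInf_mem (hSne a b) (hSbdd a b)
        exact ⟨g, hgc, hg⟩
      have hs_le : ∀ a b, ∀ g : S, g ∈ c → s a b ≤ |g.1 a b| :=
        fun a b g hg => csInf_le (hSbdd a b) (Set.mem_image_of_mem _ hg)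
      have hs_nonneg : ∀ a b, 0 ≤ s a b := by
        intro a b
        obtain ⟨g, _, hg⟩ := hs_mem a b
        rw [← hg]; exact abs_nonneg _
      have hs_lef : ∀ a b, s a b ≤ |f a b| :=
        fun a b => (hs_le a b g1 hg1).trans (g1.2.2.1 a b).1
      have hs_symm : ∀ a b, s a b = s b a := by
        intro a b
        have : (fun g : S => |g.1 a b|) '' c = (fun g : S => |g.1 b a|) '' c := by
          apply Set.image_congr
          intro g _
          rw [g.2.1 a b, abs_neg]
        simp only [hs, this]
      set m0 : V → V → ℤ := fun a b => Int.sign (f a b) * s a b with hm0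
      have habs : ∀ a b, |m0 a b| = s a b := by
        intro a b
        rcases eq_or_ne (f a b) 0 with hf0 | hf0
        · have h0 : s a b = 0 := le_antisymm (by simpa [hf0] using hs_lef a b) (hs_nonneg a b)
          simp [hm0, h0]
        · simp only [hm0, abs_mul]
          rw [abs_of_nonneg (hs_nonneg a b)]
          rcases Int.lt_or_lt_of_ne hf0 with h | h
          · simp [Int.sign_eq_neg_one_of_neg h]
          · simp [Int.sign_eq_one_of_pos h]
      have hm0f : IntBelow m0 f := by
        intro a b
        constructor
        · rw [habs]; exact hs_lef a b
        · have : m0 a b * f a b = (Int.sign (f a b) * f a b) * s a b := by ring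
          rw [this]
          apply mul_nonneg _ (hs_nonneg a b)
          rw [mul_comm, Int.mul_sign_self]
          positivity
      -- finite lower bounds in the chain
      have chainLB : ∀ T : Finset S, ↑T ⊆ c → ∃ g0 : S, g0 ∈ c ∧ ∀ g ∈ T, IntBelow g0.1 g.1 := by
        intro T
        induction T using Finset.induction_on with
        | empty => exact fun _ => ⟨g1, hg1, by simp⟩
        | @insert a T hnotmem ih =>
          intro hsub
          have haC : a ∈ c := hsub (Finset.mem_insert_self a T)
          obtain ⟨g0, hg0c, hg0⟩ := ih (fun x hx => hsub (Finset.mem_insert_of_mem hx))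
          rcases eq_or_ne a g0 with heq | hne
          · exact ⟨a, haC, fun g hg => by
              rcases Finset.mem_insert.mp hg with rfl | hg
              · exact intBelow_refl _
              · rw [heq]; exact hg0 g hg⟩
          · rcases hc haC hg0c hne with h | h
            · -- h : r a g0, i.e. IntBelow g0 a
              exact ⟨g0, hg0c, fun g hg => by
                rcases Finset.mem_insert.mp hg with rfl | hg
                · exact h
                · exact hg0 g hg⟩
            · -- h : r g0 a, i.e. IntBelow a g0
              exact ⟨a, haC, fun g hg => by
                rcases Finset.mem_insert.mp hg with rfl | hg
                · exact intBelow_refl _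
                · exact intBelow_trans h (hg0 g hg)⟩
      -- attainment on finite coordinate sets
      have hatt : ∀ x : V, ∃ g0 : S, g0 ∈ c ∧ ∀ u ∈ D x, m0 x u = g0.1 x u := by
        intro x
        have h1 : ∀ u : V, ∃ g : S, g ∈ c ∧ |g.1 x u| = s x u := fun u => hs_mem x u
        choose gc hgc1 hgc2 using h1
        obtain ⟨g0, hg0c, hg0⟩ := chainLB ((D x).image gc) (by
          intro y hy
          simp only [Finset.coe_image, Set.mem_image] at hy
          obtain ⟨u, _, rfl⟩ := hy
          exact hgc1 u)
        refine ⟨g0, hg0c, fun u hu => ?_⟩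
        have h2 : |g0.1 x u| ≤ |(gc u).1 x u| :=
          (hg0 (gc u) (Finset.mem_image_of_mem gc hu) x u).1
        have h3 : |g0.1 x u| = s x u := le_antisymm (by rw [← hgc2 u]; exact h2) (hs_le x u g0 hg0c)
        apply int_eq_of_abs_eq
        · rw [habs, h3]
        · exact int_mul_nonneg_trans (z := f x u) (hm0f x u).2 (g0.2.2.1 x u).2 (hm0f x u).1
      -- m0 is in S
      have hm0S : m0 ∈ S := by
        refine ⟨?_, hm0f, ?_⟩
        · intro a b
          simp only [hm0]
          rw [hskew a b, Int.sign_neg, hs_symm a b]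
          ring
        · intro x
          obtain ⟨g0, hg0c, hg0⟩ := hatt x
          rw [Finset.sum_congr rfl (fun u hu => hg0 u hu)]
          exact g0.2.2.2 x
      refine ⟨⟨m0, hm0S⟩, fun g hg => ?_⟩
      intro a b
      refine ⟨by rw [habs]; exact hs_le a b g hg, ?_⟩
      exact int_mul_nonneg_trans (z := f a b) (hm0f a b).2 (g.2.2.1 a b).2 (hm0f a b).1
    · intro a b c hab hbc
      exact intBelow_trans hbc hab
  obtain ⟨mm, hmm⟩ := hzorn
  obtain ⟨hskew', hbelow', hsum'⟩ := mm.2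
  set f' : V → V → ℤ := mm.1 with hf'
  have hmin : ∀ g : V → V → ℤ, g ∈ S → IntBelow g f' → g = f' := by
    intro g hgS hg
    exact intBelow_antisymm hg (hmm ⟨g, hgS⟩ hg)
  have hsupp : ∀ x u, f' x u ≠ 0 → u ∈ D x := by
    intro x u h
    rw [hDmem]
    intro hf0
    have := (hbelow' x u).1
    rw [hf0] at this
    simp only [abs_zero] at this
    exact h (abs_nonpos_iff.mp this)
  refine ⟨f', hskew', ?_, ?_, ?_, ?_, ?_⟩
  · -- adjacency
    intro u v h
    exact hadj u v (by
      intro hf0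
      exact h (by
        have := (hbelow' u v).1
        rw [hf0] at this
        simpa using abs_nonpos_iff.mp (by simpa using this)))
  · -- finiteness
    intro v
    apply Set.Finite.subset (D v).finite_toSet
    intro u hu
    exact hsupp v u hu
  · -- defect condition
    intro v
    have e1 : (∑ᶠ u : V, f' v u) = ∑ u ∈ D v, f' v u :=
      finsum_eq_sum_of_support_subset _ (fun u hu => hsupp v u hu)
    have e2 : (∑ᶠ u : V, f v u) = ∑ u ∈ D v, f v u :=
      finsum_eq_sum_of_support_subset _ (fun u hu => (hDmem v u).mpr hu)
    rw [e1, hsum' v, ← e2]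
    exact hδ v
  · -- acyclicity
    intro hcyc
    obtain ⟨d, vv, hinj, hedge⟩ := cycle_extract f' hskew' hcyc
    obtain ⟨w, hw1, hw3, hw4, hw5⟩ := cancel_lemma f' hskew' d vv hinj hedge
    set g' : V → V → ℤ := fun a b => f' a b - w a b with hg'
    have hg'f' : IntBelow g' f' := fun a b => hw3 a b
    have hg'S : g' ∈ S := by
      refine ⟨?_, intBelow_trans hg'f' hbelow', ?_⟩
      · intro a b
        simp only [hg']
        rw [hskew' a b, hw1 a b]
        ring
      · intro x
        simp only [hg']
        rw [Finset.sum_sub_distrib, hsum' x, hw4 x (D x) (fun b hb => hsupp x b (by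
          intro hf0
          have := (hw3 x b).1
          rw [hf0] at this
          simp only [zero_sub, abs_neg, abs_zero] at this
          exact hb (abs_nonpos_iff.mp this)))]
        ring
    have h5 := hmin g' hg'S hg'f'
    have hcontra : f' (vv 0) (vv 1) - w (vv 0) (vv 1) = f' (vv 0) (vv 1) :=
      congrFun (congrFun h5 (vv 0)) (vv 1)
    rw [hw5] at hcontra
    omega
  · -- boundedness
    intro k
    constructor
    · intro hk u v
      exact ((hbelow' u v).1).trans (hk u v)
    · intro hk v
      have e1 : (∑ᶠ u : V, |f' u v|) = ∑ u ∈ D v, |f' u v| := by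
        apply finsum_eq_sum_of_support_subset
        intro u hu
        apply Finset.mem_coe.mpr
        apply hsupp v u
        rw [hskew' v u]
        simp only [Function.mem_support, ne_eq, abs_eq_zero] at hu
        omega
      have e2 : (∑ᶠ u : V, |f u v|) = ∑ u ∈ D v, |f u v| := by
        apply finsum_eq_sum_of_support_subset
        intro u hu
        apply Finset.mem_coe.mpr
        rw [hDmem]
        simp only [Function.mem_support, ne_eq, abs_eq_zero] at hu
        rw [hskew v u]
        omega
      rw [e1]
      calc ∑ u ∈ D v, |f' u v| ≤ ∑ u ∈ D v, |f u v| :=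
            Finset.sum_le_sum (fun u _ => (hbelow' u v).1)
        _ = ∑ᶠ u : V, |f u v| := e2.symm
        _ ≤ (k : ℤ) := hk v
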